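/- For every k ≥ 1 there exist constants C > 0 and L₀ > 0 such that for every L ≥ L₀ and every λ = (λ₁,…,λ_k) ∈ ℂ^k with |λ_i − λ_j| ≥ L for all 1 ≤ i < j ≤ k, one has | D₁₁^{bulk,k}(λ₁,…,λ_k) − π^{−k}·∏_{m=2}^k ( 1 − |λ_m−λ₁|^{−4} ) | ≤ C·e^{−L²}. -/

import Mathlib

open ComplexConjugate Filter MeasureTheory Topology

noncomputable section

/-- Exponential polynomial `e_p(x) = ∑_{k=0}^p x^k/k!`. -/
def epol (p : ℕ) (x : ℂ) : ℂ := ∑ k ∈ Finset.range (p + 1), x ^ k / (Nat.factorial k : ℂ)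

/-- `f_p(x) = (p+1)·e_p(x) - x·e_{p-1}(x)`, with `e_{-1} ≡ 0`. -/
def fpol (p : ℕ) (x : ℂ) : ℂ :=
  ((p : ℂ) + 1) * epol p x - x * (if p = 0 then 0 else epol (p - 1) x)

/-- The polynomial `𝔉_n(x,y,z)`. -/
def Fgoth (n : ℕ) (x y z : ℂ) : ℂ :=
  epol n (x * y) * epol n (x * z) - epol n (x * y * z) * epol n x * (1 - x * (1 - y) * (1 - z))
    + ((1 - y) * (1 - z) / (Nat.factorial n : ℂ)) *
      (((x * y * z) ^ (n + 1) * epol n x - x ^ (n + 1) * epol n (x * y * z)) / (1 - y * z))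

/-- The weight `ω(x,y|λ,μ) = (1/π)(1+(x-λ)(y-μ))e^{-xy}`. -/
def omegaW (x y l m : ℂ) : ℂ :=
  (1 / (Real.pi : ℂ)) * (1 + (x - l) * (y - m)) * Complex.exp (-(x * y))

/-- The finite-`N` reduced kernel `κ^{(N)}(x̄,y|λ,λ̄)`. -/
def kapN (N : ℕ) (xb y l lb : ℂ) : ℂ :=
  (((N : ℂ) + 1) * Fgoth (N + 1) (l * lb) (xb / lb) (y / l)
      - l * lb * Fgoth N (l * lb) (xb / lb) (y / l)) /
    ((xb - lb) ^ 2 * (y - l) ^ 2 * fpol N (l * lb))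

/-- The finite-`N` kernel `K₁₁^{(N)}(x,x̄,y,ȳ|λ,λ̄)`. -/
def K11N (N : ℕ) (x xb y yb l lb : ℂ) : ℂ := omegaW x xb l lb * kapN N xb y l lb

/-- The finite-`N` kernel `K₁₂^{(N)}(x,x̄,y,ȳ|u,ū,v,v̄)`. -/
def K12N (N : ℕ) (x xb y yb u ub v vb : ℂ) : ℂ :=
  omegaW x xb u vb / kapN N ub v u vb *
    (kapN N ub v u vb * kapN N xb y u vb - kapN N ub y u vb * kapN N xb v u vb)

/-- `Z_N = π^N ∏_{j=1}^N j!`. -/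
def Zconst (N : ℕ) : ℂ := (Real.pi : ℂ) ^ N * ∏ j ∈ Finset.Icc 1 N, (Nat.factorial j : ℂ)

/-- Vandermonde product `∏_{0 ≤ j < i < n} (v i - v j)`. -/
def vdm (n : ℕ) (v : ℕ → ℂ) : ℂ := ∏ i ∈ Finset.range n, ∏ j ∈ Finset.range i, (v i - v j)

/-- Pads the `k` conditioned eigenvalues `lam` with the `N-k` integration variables `w`. -/
def pad (N k : ℕ) (lam : Fin k → ℂ) (w : Fin (N - k) → ℂ) (m : ℕ) : ℂ :=
  if h : m < k then lam ⟨m, h⟩ else if h2 : m - k < N - k then w ⟨m - k, h2⟩ else 0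

/-- Conditional diagonal overlap `D₁₁^{(N,k)}`. -/
def D11 (N k : ℕ) (lam : Fin k → ℂ) : ℂ :=
  (Nat.factorial N : ℂ) / (Nat.factorial (N - k) : ℂ) / Zconst N *
    Complex.exp (-(pad N k lam (fun _ => 0) 0 * conj (pad N k lam (fun _ => 0) 0))) *
    ∫ w : Fin (N - k) → ℂ,
      vdm (N - 1) (fun m => pad N k lam w (m + 1)) *
        conj (vdm (N - 1) (fun m => pad N k lam w (m + 1))) *
        ∏ m ∈ Finset.Icc 1 (N - 1),
          ((1 + (pad N k lam w m - pad N k lam w 0) *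
                (conj (pad N k lam w m) - conj (pad N k lam w 0))) *
            Complex.exp (-(pad N k lam w m * conj (pad N k lam w m))))

/-- Conditional off-diagonal overlap `D₁₂^{(N,k)}`. -/
def D12 (N k : ℕ) (lam : Fin k → ℂ) : ℂ :=
  -((Nat.factorial N : ℂ) / (Nat.factorial (N - k) : ℂ) / Zconst N *
    Complex.exp (-(pad N k lam (fun _ => 0) 0 * conj (pad N k lam (fun _ => 0) 0)
        + pad N k lam (fun _ => 0) 1 * conj (pad N k lam (fun _ => 0) 1))) *
    ∫ w : Fin (N - k) → ℂ,
      vdm (N - 1) (fun m => pad N k lam w (m + 1)) *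
        vdm (N - 1) (fun m => conj (pad N k lam w (if m = 0 then 0 else m + 1))) *
        ∏ m ∈ Finset.Icc 2 (N - 1),
          ((1 + (pad N k lam w m - pad N k lam w 0) *
                (conj (pad N k lam w m) - conj (pad N k lam w 1))) *
            Complex.exp (-(pad N k lam w m * conj (pad N k lam w m)))))

/-- `D̃₁₁^{(N,k)}` with the conjugated variables treated as independent. -/
def D11t (N k : ℕ) (lam mu : Fin k → ℂ) : ℂ :=
  (Nat.factorial N : ℂ) / (Nat.factorial (N - k) : ℂ) / Zconst N *
    Complex.exp (-(pad N k lam (fun _ => 0) 0 * pad N k mu (fun _ => 0) 0)) *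
    ∫ w : Fin (N - k) → ℂ,
      vdm (N - 1) (fun m => pad N k lam w (m + 1)) *
        vdm (N - 1) (fun m => pad N k mu (fun i => conj (w i)) (m + 1)) *
        ∏ m ∈ Finset.Icc 1 (N - 1),
          ((1 + (pad N k lam w m - pad N k lam w 0) *
                (pad N k mu (fun i => conj (w i)) m - pad N k mu (fun i => conj (w i)) 0)) *
            Complex.exp (-(pad N k lam w m * pad N k mu (fun i => conj (w i)) m)))

/-- `D̃₁₂^{(N,k)}` with the conjugated variables treated as independent. -/
def D12t (N k : ℕ) (lam mu : Fin k → ℂ) : ℂ :=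
  -((Nat.factorial N : ℂ) / (Nat.factorial (N - k) : ℂ) / Zconst N *
    Complex.exp (-(pad N k lam (fun _ => 0) 0 * pad N k mu (fun _ => 0) 0
        + pad N k lam (fun _ => 0) 1 * pad N k mu (fun _ => 0) 1)) *
    ∫ w : Fin (N - k) → ℂ,
      vdm (N - 1) (fun m => pad N k lam w (m + 1)) *
        vdm (N - 1) (fun m => pad N k mu (fun i => conj (w i)) (if m = 0 then 0 else m + 1)) *
        ∏ m ∈ Finset.Icc 2 (N - 1),
          ((1 + (pad N k lam w m - pad N k lam w 0) *
                (pad N k mu (fun i => conj (w i)) m - pad N k mu (fun i => conj (w i)) 1)) *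
            Complex.exp (-(pad N k lam w m * pad N k mu (fun i => conj (w i)) m))))

/-- Bulk weight `ω^{bulk}`. -/
def omegaBulk (u ub l lb : ℂ) : ℂ :=
  (1 / (Real.pi : ℂ)) * (1 + (u - l) * (ub - lb)) * Complex.exp (-((u - l) * (ub - lb)))

/-- Bulk reduced kernel `κ^{bulk}(ū,v|λ,λ̄) = (1+(w-1)e^w)/w²`, `w = (ū-λ̄)(v-λ)`. -/
def kapBulk (ub v l lb : ℂ) : ℂ :=
  (1 + ((ub - lb) * (v - l) - 1) * Complex.exp ((ub - lb) * (v - l))) /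
    ((ub - lb) * (v - l)) ^ 2

def K11bulk (u ub v vb l lb : ℂ) : ℂ := omegaBulk u ub l lb * kapBulk ub v l lb

def K12bulk (x xb y yb u ub v vb : ℂ) : ℂ :=
  omegaBulk x xb u vb / kapBulk ub v u vb *
    (kapBulk ub v u vb * kapBulk xb y u vb - kapBulk ub y u vb * kapBulk xb v u vb)

/-- `F(a) = (2π)^{-1/2} ∫₀^∞ e^{-(a+t)²/2} dt`, entire continuation of `(1/2)erfc(a/√2)`. -/
def Ferf (a : ℂ) : ℂ :=
  (1 / (Real.sqrt (2 * Real.pi) : ℂ)) *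
    ∫ t in Set.Ioi (0 : ℝ), Complex.exp (-((a + (t : ℂ)) ^ 2) / 2)

/-- The function `H(a,b,c,d,f)` from the edge scaling limit. -/
def Hedge (a b c d f : ℂ) : ℂ :=
  -(Real.sqrt (2 * Real.pi) : ℂ) /
      (1 - (Real.sqrt (2 * Real.pi) : ℂ) * a * Complex.exp (a ^ 2 / 2) * Ferf a) *
    deriv (fun x : ℂ =>
      Complex.exp ((a + x) ^ 2 / 2) *
        (Complex.exp (-f) * Ferf (b + x) * Ferf (c + x) - Ferf (d + x) * Ferf (a + x) +
          f * Ferf d * Ferf (a + x))) 0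

def omegaEdge (x xb l lb : ℂ) : ℂ :=
  (1 / (Real.pi : ℂ)) * (1 + (x - l) * (xb - lb)) * Complex.exp (-(x * xb))

def kapEdge (xb y l lb : ℂ) : ℂ :=
  Complex.exp (xb * y) * Hedge (l + lb) (l + xb) (y + lb) (y + xb) ((l - y) * (lb - xb)) /
    ((l - y) ^ 2 * (lb - xb) ^ 2)

def K11edge (x xb y yb l lb : ℂ) : ℂ := omegaEdge x xb l lb * kapEdge xb y l lb

def K12edge (x xb y yb u ub v vb : ℂ) : ℂ :=
  omegaEdge x xb u vb / kapEdge ub v u vb *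
    (kapEdge ub v u vb * kapEdge xb y u vb - kapEdge ub y u vb * kapEdge xb v u vb)

/-- Index embedding `Fin (k-1) → Fin k`, `i ↦ i+1`. -/
def sh1 {k : ℕ} (i : Fin (k - 1)) : Fin k := ⟨i.val + 1, by have := i.isLt; omega⟩

/-- Index embedding `Fin (k-2) → Fin k`, `i ↦ i+2`. -/
def sh2 {k : ℕ} (i : Fin (k - 2)) : Fin k := ⟨i.val + 2, by have := i.isLt; omega⟩

def ev0 {k : ℕ} (lam : Fin k → ℂ) : ℂ := if h : 0 < k then lam ⟨0, h⟩ else 0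

def ev1 {k : ℕ} (lam : Fin k → ℂ) : ℂ := if h : 1 < k then lam ⟨1, h⟩ else 0

/-- The edge overlap function `D₁₁^{edge,k}`. -/
def D11edgeF (k : ℕ) (lam : Fin k → ℂ) : ℂ :=
  (1 / (Real.sqrt (2 * Real.pi ^ 3) : ℂ)) *
    (Complex.exp (-((ev0 lam + conj (ev0 lam)) ^ 2 / 2)) -
      (Real.sqrt (2 * Real.pi) : ℂ) * (ev0 lam + conj (ev0 lam)) *
        Ferf (ev0 lam + conj (ev0 lam))) *
    Matrix.det (Matrix.of fun i j : Fin (k - 1) =>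
      K11edge (lam (sh1 i)) (conj (lam (sh1 i))) (lam (sh1 j)) (conj (lam (sh1 j)))
        (ev0 lam) (conj (ev0 lam)))

/-- The bulk overlap function `D₁₁^{bulk,k}`. -/
def D11bulkF (k : ℕ) (lam : Fin k → ℂ) : ℂ :=
  (1 / (Real.pi : ℂ)) *
    Matrix.det (Matrix.of fun i j : Fin (k - 1) =>
      K11bulk (lam (sh1 i)) (conj (lam (sh1 i))) (lam (sh1 j)) (conj (lam (sh1 j)))
        (ev0 lam) (conj (ev0 lam)))

/-- The bulk off-diagonal overlap function `D₁₂^{bulk,k}`. -/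
def D12bulkF (k : ℕ) (lam : Fin k → ℂ) : ℂ :=
  -(1 / (Real.pi : ℂ) ^ 2) * kapBulk (conj (ev0 lam)) (ev1 lam) (ev0 lam) (conj (ev1 lam)) *
    Matrix.det (Matrix.of fun i j : Fin (k - 2) =>
      K12bulk (lam (sh2 i)) (conj (lam (sh2 i))) (lam (sh2 j)) (conj (lam (sh2 j)))
        (ev0 lam) (conj (ev0 lam)) (ev1 lam) (conj (ev1 lam)))

/-- The first-order differential operator `𝔇_m = 1 - (λ_m-λ₁)(μ_m-μ₁) - (λ_m-λ₁)∂/∂λ_m`. -/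
def Dop {k : ℕ} (m : Fin k) (g : (Fin k → ℂ) → (Fin k → ℂ) → ℂ)
    (lam mu : Fin k → ℂ) : ℂ :=
  (1 - (lam m - lam ⟨0, m.pos⟩) * (mu m - mu ⟨0, m.pos⟩)) * g lam mu -
    (lam m - lam ⟨0, m.pos⟩) * deriv (fun t => g (Function.update lam m t) mu) (lam m)

/-- Holomorphic extension `ρ̃` of the bulk `k`-point Ginibre correlation function. -/
def rhoT (k : ℕ) (lam mu : Fin k → ℂ) : ℂ :=
  ((Real.pi : ℂ) ^ k)⁻¹ * Complex.exp (-(∑ m, lam m * mu m)) *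
    Matrix.det (Matrix.of fun i j : Fin k => Complex.exp (mu i * lam j))

/-- Holomorphic extension `D̃₁₁^{bulk,k}` of the bulk conditional diagonal overlap. -/
def D11tBulk (k : ℕ) (lam mu : Fin k → ℂ) : ℂ :=
  ((Real.pi : ℂ) ^ k)⁻¹ *
    (∏ i : Fin (k - 1),
      (1 + (lam (sh1 i) - ev0 lam) * (mu (sh1 i) - ev0 mu)) /
          ((lam (sh1 i) - ev0 lam) ^ 2 * (mu (sh1 i) - ev0 mu) ^ 2) *
        Complex.exp (-((lam (sh1 i) - ev0 lam) * (mu (sh1 i) - ev0 mu)))) *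
    Matrix.det (Matrix.of fun m n : Fin (k - 1) =>
      1 - (1 - (mu (sh1 m) - ev0 mu) * (lam (sh1 n) - ev0 lam)) *
        Complex.exp ((mu (sh1 m) - ev0 mu) * (lam (sh1 n) - ev0 lam)))

/-- Monic bi-orthogonal polynomials `P_k(z)` for the weight `ω(·,·|λ,λ̄)`. -/
def Ppoly (l : ℂ) (k : ℕ) (z : ℂ) : ℂ :=
  ∑ m ∈ Finset.range (k + 1), l ^ (k - m) * (fpol m (l * conj l) / fpol k (l * conj l)) * z ^ m

/-- The reduced kernel `G^{(N)}(x,y,z)` as a double sum. -/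
def Gker (N : ℕ) (x y z : ℂ) : ℂ :=
  ∑ m ∈ Finset.range (N + 1), ∑ n ∈ Finset.range (N + 1),
    fpol m x * fpol n x * y ^ m * z ^ n *
      ∑ k ∈ Finset.Icc (max m n) N,
        x ^ k / ((Nat.factorial (k + 1) : ℂ) * fpol k x * fpol (k + 1) x)

end


-- ===================== auxiliary lemmas for statement8 =====================

set_option maxHeartbeats 1000000

open Finset in
lemma my_term_bound {n : ℕ} (M : Matrix (Fin n) (Fin n) ℂ) (c : Fin n → ℝ)
    (hc : ∀ i, 0 < c i) (ε : ℝ) (hε0 : 0 ≤ ε) (hε1 : ε ≤ 1)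
    (hoff : ∀ i j, i ≠ j → (c i / c j) * ‖M i j‖ ≤ ε)
    (hdiag : ∀ i, ‖M i i‖ ≤ 1)
    (σ : Equiv.Perm (Fin n)) (hσ : σ ≠ 1) :
    ‖∏ i, M (σ i) i‖ ≤ ε ^ 2 := by
  set f : Fin n → ℝ := fun i => (c (σ i) / c i) * ‖M (σ i) i‖ with hf
  have hfnn : ∀ i, 0 ≤ f i := fun i =>
    mul_nonneg (le_of_lt (div_pos (hc _) (hc _))) (norm_nonneg _)
  have hf1 : ∀ i, f i ≤ 1 := by
    intro i
    by_cases h : σ i = i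
    · simp only [hf, h]
      rw [div_self (ne_of_gt (hc i)), one_mul]
      exact hdiag i
    · exact le_trans (hoff _ _ h) hε1
  have hprodc : ∏ i, (c (σ i) / c i) = 1 := by
    rw [Finset.prod_div_distrib, Equiv.prod_comp σ c,
      div_self (ne_of_gt (Finset.prod_pos (fun i _ => hc i)))]
  have habs : ‖∏ i, M (σ i) i‖ = ∏ i, f i := by
    rw [norm_prod, hf, Finset.prod_mul_distrib, hprodc, one_mul]
  rw [habs]
  set F : Finset (Fin n) := Finset.univ.filter (fun i => σ i ≠ i) with hF
  have hcard : 2 ≤ F.card := by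
    obtain ⟨i, hi⟩ : ∃ i, σ i ≠ i := by
      by_contra h
      push_neg at h
      exact hσ (Equiv.ext h)
    have hi2 : σ (σ i) ≠ σ i := fun h => hi (σ.injective h)
    have : 1 < F.card := Finset.one_lt_card.mpr
      ⟨σ i, by simp [hF, hi2], i, by simp [hF, hi], hi⟩
    omega
  have h1 : ∏ i, f i ≤ ∏ i ∈ F, f i := by
    rw [← Finset.prod_filter_mul_prod_filter_not Finset.univ (fun i => σ i ≠ i) f]
    have : ∏ i ∈ Finset.univ.filter (fun i => ¬ σ i ≠ i), f i ≤ 1 :=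
      Finset.prod_le_one (fun i _ => hfnn i) (fun i _ => hf1 i)
    nlinarith [Finset.prod_nonneg (fun i (_ : i ∈ F) => hfnn i), this]
  have h2 : ∏ i ∈ F, f i ≤ ε ^ F.card := by
    rw [← Finset.prod_const]
    refine Finset.prod_le_prod (fun i _ => hfnn i) (fun i hi => ?_)
    exact hoff _ _ (by simpa [hF] using hi)
  have h3 : ε ^ F.card ≤ ε ^ 2 := pow_le_pow_of_le_one hε0 hε1 hcard
  linarith

open Finset in
lemma my_det_approx {n : ℕ} (M : Matrix (Fin n) (Fin n) ℂ) (c : Fin n → ℝ)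
    (hc : ∀ i, 0 < c i) (ε : ℝ) (hε0 : 0 ≤ ε) (hε1 : ε ≤ 1)
    (hoff : ∀ i j, i ≠ j → (c i / c j) * ‖M i j‖ ≤ ε)
    (hdiag : ∀ i, ‖M i i‖ ≤ 1) :
    ‖M.det - ∏ i, M i i‖ ≤ (n.factorial : ℝ) * ε ^ 2 := by
  have hsplit : M.det - ∏ i, M i i
      = ∑ σ ∈ Finset.univ.erase (1 : Equiv.Perm (Fin n)),
          Equiv.Perm.sign σ • ∏ i, M (σ i) i := by
    rw [Matrix.det_apply, ← Finset.add_sum_erase _ _ (Finset.mem_univ (1 : Equiv.Perm (Fin n)))]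
    simp
  rw [hsplit]
  calc ‖∑ σ ∈ Finset.univ.erase (1 : Equiv.Perm (Fin n)),
          Equiv.Perm.sign σ • ∏ i, M (σ i) i‖
      ≤ ∑ σ ∈ Finset.univ.erase (1 : Equiv.Perm (Fin n)),
          ‖Equiv.Perm.sign σ • ∏ i, M (σ i) i‖ :=
        norm_sum_le _ _
    _ ≤ ∑ _σ ∈ Finset.univ.erase (1 : Equiv.Perm (Fin n)), ε ^ 2 := by
        refine Finset.sum_le_sum (fun σ hσ => ?_)
        have hs : ‖(Equiv.Perm.sign σ : ℤˣ) • ∏ i, M (σ i) i‖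
            = ‖∏ i, M (σ i) i‖ := by
          rcases Int.units_eq_one_or (Equiv.Perm.sign σ) with h | h <;> simp [h]
        rw [hs]
        exact my_term_bound M c hc ε hε0 hε1 hoff hdiag σ (Finset.ne_of_mem_erase hσ)
    _ ≤ (n.factorial : ℝ) * ε ^ 2 := by
        rw [Finset.sum_const, nsmul_eq_mul]
        have h1 : (Finset.univ.erase (1 : Equiv.Perm (Fin n))).card ≤ n.factorial := by
          calc (Finset.univ.erase (1 : Equiv.Perm (Fin n))).card
              ≤ (Finset.univ : Finset (Equiv.Perm (Fin n))).card := Finset.card_erase_le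
            _ = n.factorial := by simp [Finset.card_univ, Fintype.card_perm]
        have h2 : ((Finset.univ.erase (1 : Equiv.Perm (Fin n))).card : ℝ) ≤ (n.factorial : ℝ) := by
          exact_mod_cast h1
        nlinarith [sq_nonneg ε]

lemma my_prod_sub {ι : Type*} (s : Finset ι) (f g : ι → ℝ)
    (hf : ∀ i ∈ s, |f i| ≤ 1) (hg : ∀ i ∈ s, |g i| ≤ 1) :
    |∏ i ∈ s, f i - ∏ i ∈ s, g i| ≤ ∑ i ∈ s, |f i - g i| := by
  induction s using Finset.cons_induction with
  | empty => simp
  | cons a s ha ih =>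
    rw [Finset.prod_cons, Finset.prod_cons, Finset.sum_cons]
    have key : f a * ∏ i ∈ s, f i - g a * ∏ i ∈ s, g i
        = f a * (∏ i ∈ s, f i - ∏ i ∈ s, g i) + (f a - g a) * ∏ i ∈ s, g i := by ring
    rw [key]
    have h1 : |f a * (∏ i ∈ s, f i - ∏ i ∈ s, g i)| ≤ ∑ i ∈ s, |f i - g i| := by
      rw [abs_mul]
      have := ih (fun i hi => hf i (Finset.mem_cons.mpr (Or.inr hi)))
        (fun i hi => hg i (Finset.mem_cons.mpr (Or.inr hi)))
      have hfa := hf a (Finset.mem_cons_self a s)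
      have hnn : (0:ℝ) ≤ |∏ i ∈ s, f i - ∏ i ∈ s, g i| := abs_nonneg _
      nlinarith [abs_nonneg (f a)]
    have h2 : |(f a - g a) * ∏ i ∈ s, g i| ≤ |f a - g a| := by
      rw [abs_mul]
      have hp : |∏ i ∈ s, g i| ≤ 1 := by
        rw [Finset.abs_prod]
        exact Finset.prod_le_one (fun i _ => abs_nonneg _)
          (fun i hi => hg i (Finset.mem_cons.mpr (Or.inr hi)))
      nlinarith [abs_nonneg (f a - g a)]
    calc |f a * (∏ i ∈ s, f i - ∏ i ∈ s, g i) + (f a - g a) * ∏ i ∈ s, g i|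
        ≤ |f a * (∏ i ∈ s, f i - ∏ i ∈ s, g i)| + |(f a - g a) * ∏ i ∈ s, g i| := abs_add_le _ _
      _ ≤ |f a - g a| + ∑ i ∈ s, |f i - g i| := by linarith

lemma my_ratio (L a b d : ℝ) (hL : 1 ≤ L) (ha : L ≤ a) (hb : L ≤ b) (hd : L ≤ d)
    (htri : a ≤ b + d) : a^2/b^2 * Real.exp (-(d^2)/2) ≤ 4 * Real.exp (-(L^2)/2) := by
  have hL0 : 0 < L := by linarith
  have hb0 : 0 < b := by linarith
  have ha0 : 0 < a := by linarith
  have h1 : a * L ≤ (L + d) * b := by nlinarith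
  have h2 : a^2 / b^2 ≤ (L+d)^2 / L^2 := by
    rw [div_le_div_iff₀ (pow_pos hb0 2) (pow_pos hL0 2)]
    have := mul_le_mul h1 h1 (by positivity) (by nlinarith)
    nlinarith [this]
  have he : (d^2 - L^2)/2 + 1 ≤ Real.exp ((d^2-L^2)/2) := Real.add_one_le_exp _
  have h3 : (L+d)^2 ≤ 4 * L^2 * Real.exp ((d^2 - L^2)/2) := by
    have hstep : 4*L^2*((d^2-L^2)/2+1) ≤ 4*L^2*Real.exp ((d^2-L^2)/2) :=
      mul_le_mul_of_nonneg_left he (by positivity)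
    have hpoly : (L+d)^2 ≤ 4*L^2*((d^2-L^2)/2+1) := by
      have hu : 0 ≤ d - L := by linarith
      have hL1 : 0 ≤ L - 1 := by linarith
      nlinarith [mul_nonneg (mul_nonneg hu hu) (mul_nonneg (by linarith : (0:ℝ) ≤ L + 1) hL1),
        mul_nonneg (mul_nonneg hu hL0.le) (mul_nonneg (by linarith : (0:ℝ) ≤ L + 1) hL1),
        mul_nonneg hu hL1]
    linarith
  have h4 : Real.exp ((d^2 - L^2)/2) * Real.exp (-(d^2)/2) = Real.exp (-(L^2)/2) := by
    rw [← Real.exp_add]; congr 1; ring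
  have h5 : (L+d)^2 * Real.exp (-(d^2)/2) ≤ 4 * L^2 * Real.exp (-(L^2)/2) := by
    rw [← h4, ← mul_assoc]
    exact mul_le_mul_of_nonneg_right h3 (Real.exp_pos _).le
  calc a^2/b^2 * Real.exp (-(d^2)/2) ≤ (L+d)^2/L^2 * Real.exp (-(d^2)/2) :=
        mul_le_mul_of_nonneg_right h2 (Real.exp_pos _).le
    _ ≤ 4 * Real.exp (-(L^2)/2) := by
        rw [div_mul_eq_mul_div, div_le_iff₀ (pow_pos hL0 2)]
        nlinarith [h5]

lemma my_self_le_exp_half_sq (a : ℝ) : a ≤ Real.exp (a^2/2) := by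
  have := Real.add_one_le_exp (a^2/2)
  nlinarith [sq_nonneg (a-1)]

lemma my_real_off (L a b d : ℝ) (hL : 1 ≤ L) (ha : L ≤ a) (hb : L ≤ b) (hd : L ≤ d)
    (htri : a ≤ b + d) :
    (a * Real.exp (a^2/2)) / (b * Real.exp (b^2/2)) *
      ((1/Real.pi) * (1+a^2) * Real.exp (-(a^2)) *
        ((1 + (a*b+1)*Real.exp ((a^2+b^2-d^2)/2)) / (a*b)^2))
    ≤ 7 * Real.exp (-(L^2)/2) := by
  have hb0 : (0:ℝ) < b := by linarith
  have ha0 : (0:ℝ) < a := by linarith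
  have ha1 : (1:ℝ) ≤ a := by linarith
  have hb1 : (1:ℝ) ≤ b := by linarith
  have hpi : (3:ℝ) ≤ Real.pi := by linarith [Real.pi_gt_three]
  have hinv : 1/Real.pi ≤ 1/3 := by
    rw [div_le_div_iff₀ (by linarith) (by norm_num)]; linarith
  have hpip : (0:ℝ) < 1/Real.pi := by positivity
  have hD : (0:ℝ) < b*(a*b)^2 := mul_pos hb0 (pow_pos (mul_pos ha0 hb0) 2)
  have key : (a * Real.exp (a^2/2)) / (b * Real.exp (b^2/2)) *
      ((1/Real.pi) * (1+a^2) * Real.exp (-(a^2)) *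
        ((1 + (a*b+1)*Real.exp ((a^2+b^2-d^2)/2)) / (a*b)^2))
      = (1/Real.pi) * ((1+a^2)*a/(b*(a*b)^2)) *
          (Real.exp (-((a^2+b^2)/2)) + (a*b+1) * Real.exp (-(d^2)/2)) := by
    have hp : Real.exp (-(a^2)) = (Real.exp (a^2/2))⁻¹ * (Real.exp (a^2/2))⁻¹ := by
      rw [← Real.exp_neg, ← Real.exp_add]; congr 1; ring
    have hw : Real.exp ((a^2+b^2-d^2)/2)
        = Real.exp (a^2/2) * Real.exp (b^2/2) * (Real.exp (d^2/2))⁻¹ := by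
      rw [← Real.exp_neg, ← Real.exp_add, ← Real.exp_add]; congr 1; ring
    have h1 : Real.exp (-((a^2+b^2)/2)) = (Real.exp (a^2/2))⁻¹ * (Real.exp (b^2/2))⁻¹ := by
      rw [← Real.exp_neg, ← Real.exp_neg, ← Real.exp_add]; congr 1; ring
    have h2 : Real.exp (-(d^2)/2) = (Real.exp (d^2/2))⁻¹ := by
      rw [← Real.exp_neg]; congr 1; ring
    rw [hp, hw, h1, h2]
    have e1 := Real.exp_pos (a^2/2)
    have e2 := Real.exp_pos (b^2/2)
    have e3 := Real.exp_pos (d^2/2)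
    field_simp
  rw [key]
  have hXpos : (0:ℝ) < (1+a^2)*a/(b*(a*b)^2) := by
    apply div_pos (by positivity) hD
  have pa13 : a ≤ a^3 := by
    calc a = a^1 := (pow_one a).symm
    _ ≤ a^3 := pow_le_pow_right₀ ha1 (by norm_num)
  have pa14 : a ≤ a^4 := by
    calc a = a^1 := (pow_one a).symm
    _ ≤ a^4 := pow_le_pow_right₀ ha1 (by norm_num)
  have pa24 : a^2 ≤ a^4 := pow_le_pow_right₀ ha1 (by norm_num)
  have pa34 : a^3 ≤ a^4 := pow_le_pow_right₀ ha1 (by norm_num)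
  have pb23 : b^2 ≤ b^3 := pow_le_pow_right₀ hb1 (by norm_num)
  have pb03 : (1:ℝ) ≤ b^3 := one_le_pow₀ hb1
  have pb02 : (0:ℝ) ≤ b^2 := sq_nonneg b
  have pa04 : (0:ℝ) ≤ a^4 := by positivity
  have hS1 : (1/Real.pi) * ((1+a^2)*a/(b*(a*b)^2)) * Real.exp (-((a^2+b^2)/2))
      ≤ Real.exp (-(L^2)/2) := by
    have hX2a : (1+a^2)*a/(b*(a*b)^2) ≤ 2*a := by
      rw [div_le_iff₀ hD]
      have expand : 2*a*(b*(a*b)^2) = 2*(a^3*b^3) := by ring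
      rw [expand]
      have f1 : a^3 ≤ a^3*b^3 := by
        nlinarith [mul_nonneg (by positivity : (0:ℝ) ≤ a^3) (by linarith : (0:ℝ) ≤ b^3 - 1)]
      nlinarith [f1, pa13]
    have hae : a * Real.exp (-(a^2)/2) ≤ 1 := by
      have h := my_self_le_exp_half_sq a
      have h2 : Real.exp (-(a^2)/2) = (Real.exp (a^2/2))⁻¹ := by
        rw [← Real.exp_neg]; congr 1; ring
      rw [h2, ← div_eq_mul_inv, div_le_one (Real.exp_pos _)]
      exact h
    have hsplit : Real.exp (-((a^2+b^2)/2)) = Real.exp (-(a^2)/2) * Real.exp (-(b^2)/2) := by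
      rw [← Real.exp_add]; congr 1; ring
    have hbexp : Real.exp (-(b^2)/2) ≤ Real.exp (-(L^2)/2) := by
      apply Real.exp_le_exp.mpr; nlinarith
    rw [hsplit]
    calc (1/Real.pi) * ((1+a^2)*a/(b*(a*b)^2)) * (Real.exp (-(a^2)/2) * Real.exp (-(b^2)/2))
        ≤ (1/3) * (2*a) * (Real.exp (-(a^2)/2) * Real.exp (-(b^2)/2)) := by
          apply mul_le_mul_of_nonneg_right _ (by positivity)
          exact mul_le_mul hinv hX2a hXpos.le (by norm_num)
      _ = (2/3) * (a * Real.exp (-(a^2)/2)) * Real.exp (-(b^2)/2) := by ring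
      _ ≤ (2/3) * 1 * Real.exp (-(b^2)/2) := by
          have h9 := mul_le_mul_of_nonneg_left hae (by norm_num : (0:ℝ) ≤ 2/3)
          exact mul_le_mul_of_nonneg_right (by linarith) (Real.exp_pos (-(b^2)/2)).le
      _ ≤ Real.exp (-(L^2)/2) := by
          have h8 := (Real.exp_pos (-(b^2)/2)).le
          linarith [hbexp]
  have hS2 : (1/Real.pi) * ((1+a^2)*a/(b*(a*b)^2)) * ((a*b+1) * Real.exp (-(d^2)/2))
      ≤ 6 * Real.exp (-(L^2)/2) := by
    have hk : ((1+a^2)*a/(b*(a*b)^2)) * (a*b+1) ≤ 4 * (a^2/b^2) := by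
      have heq : 4 * (a^2/b^2) = (4*a^2)/(b^2) := by ring
      rw [heq, div_mul_eq_mul_div, div_le_div_iff₀ hD (pow_pos hb0 2)]
      have t1 : a^2*b^3 ≤ a^4*b^3 := mul_le_mul_of_nonneg_right pa24 (by positivity)
      have t2 : a*b^2 ≤ a^4*b^3 := mul_le_mul pa14 pb23 pb02 pa04
      have t3 : a^3*b^2 ≤ a^4*b^3 := mul_le_mul pa34 pb23 pb02 pa04
      nlinarith [t1, t2, t3]
    have hratio := my_ratio L a b d hL ha hb hd htri
    have e := (Real.exp_pos (-(d^2)/2)).le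
    calc (1/Real.pi) * ((1+a^2)*a/(b*(a*b)^2)) * ((a*b+1) * Real.exp (-(d^2)/2))
        = (1/Real.pi) * ((((1+a^2)*a/(b*(a*b)^2)) * (a*b+1)) * Real.exp (-(d^2)/2)) := by ring
      _ ≤ (1/3) * ((4 * (a^2/b^2)) * Real.exp (-(d^2)/2)) := by
          apply mul_le_mul hinv (mul_le_mul_of_nonneg_right hk e) _ (by norm_num)
          positivity
      _ = (4/3) * (a^2/b^2 * Real.exp (-(d^2)/2)) := by ring
      _ ≤ (4/3) * (4 * Real.exp (-(L^2)/2)) := mul_le_mul_of_nonneg_left hratio (by norm_num)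
      _ ≤ 6 * Real.exp (-(L^2)/2) := by nlinarith [Real.exp_pos (-(L^2)/2)]
  calc (1/Real.pi) * ((1+a^2)*a/(b*(a*b)^2)) *
          (Real.exp (-((a^2+b^2)/2)) + (a*b+1) * Real.exp (-(d^2)/2))
      = (1/Real.pi) * ((1+a^2)*a/(b*(a*b)^2)) * Real.exp (-((a^2+b^2)/2))
        + (1/Real.pi) * ((1+a^2)*a/(b*(a*b)^2)) * ((a*b+1) * Real.exp (-(d^2)/2)) := by ring
    _ ≤ 7 * Real.exp (-(L^2)/2) := by linarith

noncomputable def diagVal (s : ℝ) : ℝ :=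
  (1 - (s^2)⁻¹)/Real.pi + (1+s)*Real.exp (-s)/(Real.pi * s^2)

lemma my_diag (u l : ℂ) (h : u ≠ l) :
    K11bulk u (conj u) u (conj u) l (conj l) = ((diagVal (Complex.normSq (u-l)) : ℝ) : ℂ) := by
  have hne : u - l ≠ 0 := sub_ne_zero.mpr h
  have hs0 : Complex.normSq (u-l) ≠ 0 := by
    simpa [Complex.normSq_eq_zero] using hne
  set s : ℝ := Complex.normSq (u-l) with hsdef
  have h1 : (u - l) * (conj u - conj l) = ((s : ℝ) : ℂ) := by
    rw [← map_sub]; exact Complex.mul_conj _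
  have h2 : (conj u - conj l) * (u - l) = ((s : ℝ) : ℂ) := by
    rw [mul_comm]; exact h1
  unfold K11bulk omegaBulk kapBulk
  rw [h1, h2]
  have keyR : diagVal s = 1/Real.pi * (1+s) * Real.exp (-s) * ((1 + (s-1)*Real.exp s)/s^2) := by
    unfold diagVal
    rw [Real.exp_neg]
    have hE := Real.exp_pos s
    field_simp
    ring
  rw [keyR]
  push_cast [Complex.ofReal_exp]
  ring

lemma my_re_identity (x y : ℂ) :
    2 * ((conj x) * y).re = Complex.normSq x + Complex.normSq y - Complex.normSq (x - y) := by
  simp [Complex.mul_re, Complex.normSq_apply, Complex.sub_re, Complex.sub_im,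
    Complex.conj_re, Complex.conj_im]
  ring

lemma my_abs_omega (u l : ℂ) :
    ‖omegaBulk u (conj u) l (conj l)‖
      = (1/Real.pi) * (1 + (‖u-l‖)^2) * Real.exp (-((‖u-l‖)^2)) := by
  have h1 : (u - l) * (conj u - conj l) = ((Complex.normSq (u-l) : ℝ) : ℂ) := by
    rw [← map_sub]; exact Complex.mul_conj _
  unfold omegaBulk
  rw [h1, norm_mul, norm_mul, Complex.norm_exp]
  have e1 : ‖1 / (Real.pi : ℂ)‖ = 1/Real.pi := by
    rw [norm_div, norm_one, Complex.norm_real, Real.norm_eq_abs, abs_of_pos Real.pi_pos]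
  have e2 : ‖1 + ((Complex.normSq (u-l) : ℝ) : ℂ)‖ = 1 + (‖u-l‖)^2 := by
    have h3 : (1 : ℂ) + ((Complex.normSq (u-l) : ℝ) : ℂ) = (((1 + Complex.normSq (u-l) : ℝ)) : ℂ) := by
      push_cast; ring
    rw [h3, Complex.norm_real, Real.norm_eq_abs,
      abs_of_pos (by have := Complex.normSq_nonneg (u-l); linarith), Complex.sq_norm]
  have e3 : (-(((Complex.normSq (u-l) : ℝ) : ℂ))).re = -((‖u-l‖)^2) := by
    simp [Complex.sq_norm]
  rw [e1, e2, e3]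

lemma my_abs_kap (u v l : ℂ) (hu : u ≠ l) (hv : v ≠ l) :
    ‖kapBulk (conj u) v l (conj l)‖
      ≤ (1 + (‖u-l‖ * ‖v-l‖ + 1) *
          Real.exp (((‖u-l‖)^2 + (‖v-l‖)^2 - (‖u-v‖)^2)/2))
        / (‖u-l‖ * ‖v-l‖)^2 := by
  set x : ℂ := u - l with hx
  set y : ℂ := v - l with hy
  have hxne : x ≠ 0 := sub_ne_zero.mpr hu
  have hyne : y ≠ 0 := sub_ne_zero.mpr hv
  have hw : (conj u - conj l) * (v - l) = conj x * y := by rw [← map_sub]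
  unfold kapBulk
  rw [hw, norm_div, norm_pow, norm_mul, Complex.norm_conj]
  have hre : (conj x * y).re
      = ((‖x‖)^2 + (‖y‖)^2 - (‖u-v‖)^2)/2 := by
    have h := my_re_identity x y
    have hxy : x - y = u - v := by rw [hx, hy]; ring
    rw [hxy] at h
    rw [Complex.sq_norm, Complex.sq_norm, Complex.sq_norm]
    linarith
  have hnum : ‖1 + (conj x * y - 1) * Complex.exp (conj x * y)‖
      ≤ 1 + (‖x‖ * ‖y‖ + 1) *
          Real.exp (((‖x‖)^2 + (‖y‖)^2 - (‖u-v‖)^2)/2) := by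
    calc ‖1 + (conj x * y - 1) * Complex.exp (conj x * y)‖
        ≤ ‖(1:ℂ)‖ + ‖(conj x * y - 1) * Complex.exp (conj x * y)‖ :=
          norm_add_le _ _
      _ = 1 + ‖conj x * y - 1‖ * Real.exp ((conj x * y).re) := by
          rw [norm_one, norm_mul, Complex.norm_exp]
      _ ≤ 1 + (‖x‖ * ‖y‖ + 1) *
            Real.exp (((‖x‖)^2 + (‖y‖)^2 - (‖u-v‖)^2)/2) := by
          rw [hre]
          have habs1 : ‖conj x * y - 1‖ ≤ ‖x‖ * ‖y‖ + 1 := by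
            have h9 : ‖conj x * y - 1‖ ≤ ‖conj x * y‖ + 1 := by
              simpa using norm_sub_le (conj x * y) (1:ℂ)
            rwa [norm_mul, Complex.norm_conj] at h9
          have := mul_le_mul_of_nonneg_right habs1
            (Real.exp_pos (((‖x‖)^2 + (‖y‖)^2 - (‖u-v‖)^2)/2)).le
          linarith
  have hden : (0:ℝ) < (‖x‖ * ‖y‖)^2 := by
    have h1 := norm_pos_iff.mpr hxne
    have h2 := norm_pos_iff.mpr hyne
    positivity
  exact div_le_div_of_nonneg_right hnum hden.le

lemma my_entry_off (u v l : ℂ) (L : ℝ) (hL : 1 ≤ L)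
    (ha : L ≤ ‖u - l‖) (hb : L ≤ ‖v - l‖)
    (hd : L ≤ ‖u - v‖) :
    (‖u - l‖ * Real.exp ((‖u - l‖)^2/2)) /
        (‖v - l‖ * Real.exp ((‖v - l‖)^2/2)) *
      ‖K11bulk u (conj u) v (conj v) l (conj l)‖
      ≤ 7 * Real.exp (-(L^2)/2) := by
  have hu : u ≠ l := by
    intro h; rw [h, sub_self] at ha; simp at ha; linarith
  have hv : v ≠ l := by
    intro h; rw [h, sub_self] at hb; simp at hb; linarith
  have htri : ‖u - l‖ ≤ ‖v - l‖ + ‖u - v‖ := by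
    have h1 : u - l = (v - l) + (u - v) := by ring
    calc ‖u - l‖ = ‖(v - l) + (u - v)‖ := by rw [← h1]
      _ ≤ _ := norm_add_le _ _
  have hK : ‖K11bulk u (conj u) v (conj v) l (conj l)‖
      ≤ (1/Real.pi) * (1 + (‖u-l‖)^2) * Real.exp (-((‖u-l‖)^2)) *
        ((1 + (‖u-l‖ * ‖v-l‖ + 1) *
            Real.exp (((‖u-l‖)^2 + (‖v-l‖)^2 - (‖u-v‖)^2)/2))
          / (‖u-l‖ * ‖v-l‖)^2) := by
    unfold K11bulk
    rw [norm_mul, my_abs_omega]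
    apply mul_le_mul_of_nonneg_left (my_abs_kap u v l hu hv)
    positivity
  have hrat : 0 ≤ (‖u - l‖ * Real.exp ((‖u - l‖)^2/2)) /
      (‖v - l‖ * Real.exp ((‖v - l‖)^2/2)) := by positivity
  calc (‖u - l‖ * Real.exp ((‖u - l‖)^2/2)) /
        (‖v - l‖ * Real.exp ((‖v - l‖)^2/2)) *
      ‖K11bulk u (conj u) v (conj v) l (conj l)‖
      ≤ (‖u - l‖ * Real.exp ((‖u - l‖)^2/2)) /
          (‖v - l‖ * Real.exp ((‖v - l‖)^2/2)) *
        ((1/Real.pi) * (1 + (‖u-l‖)^2) * Real.exp (-((‖u-l‖)^2)) *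
          ((1 + (‖u-l‖ * ‖v-l‖ + 1) *
              Real.exp (((‖u-l‖)^2 + (‖v-l‖)^2 - (‖u-v‖)^2)/2))
            / (‖u-l‖ * ‖v-l‖)^2)) :=
        mul_le_mul_of_nonneg_left hK hrat
    _ ≤ 7 * Real.exp (-(L^2)/2) :=
        my_real_off L (‖u-l‖) (‖v-l‖) (‖u-v‖) hL ha hb hd htri

lemma my_diagVal_props (s : ℝ) (hs : 1 ≤ s) :
    0 ≤ (1 - (s^2)⁻¹)/Real.pi ∧ (1 - (s^2)⁻¹)/Real.pi ≤ 1 ∧ 0 ≤ diagVal s ∧ diagVal s ≤ 1 ∧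
      |diagVal s - (1 - (s^2)⁻¹)/Real.pi| ≤ Real.exp (-s) := by
  have hpi3 : (3:ℝ) ≤ Real.pi := by linarith [Real.pi_gt_three]
  have hs0 : (0:ℝ) < s := by linarith
  have hs2 : (1:ℝ) ≤ s^2 := by nlinarith
  have hs2' : (0:ℝ) < s^2 := by positivity
  have hinv1 : (s^2)⁻¹ ≤ 1 := by rw [← one_div, div_le_one hs2']; exact hs2
  have hinv0 : (0:ℝ) ≤ (s^2)⁻¹ := by positivity
  have hd0 : 0 ≤ (1 - (s^2)⁻¹)/Real.pi := div_nonneg (by linarith) (by linarith)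
  have hd13 : (1 - (s^2)⁻¹)/Real.pi ≤ 1/3 := by
    rw [div_le_div_iff₀ (by linarith) (by norm_num)]
    nlinarith
  have hd1 : (1 - (s^2)⁻¹)/Real.pi ≤ 1 := by linarith
  have hreq : diagVal s - (1 - (s^2)⁻¹)/Real.pi = (1+s)*Real.exp (-s)/(Real.pi*s^2) := by
    unfold diagVal; ring
  have hrn : 0 ≤ (1+s)*Real.exp (-s)/(Real.pi*s^2) := by positivity
  have hre : (1+s)*Real.exp (-s)/(Real.pi*s^2) ≤ Real.exp (-s) := by
    rw [div_le_iff₀ (by positivity)]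
    have hps : 1+s ≤ Real.pi * s^2 := by nlinarith
    nlinarith [mul_le_mul_of_nonneg_right hps (Real.exp_pos (-s)).le, Real.exp_pos (-s)]
  have hes : Real.exp (-s) ≤ 1/2 := by
    have h2 : (2:ℝ) ≤ Real.exp 1 := by have := Real.add_one_le_exp 1; linarith
    have h3 : Real.exp (-s) ≤ Real.exp (-1) := Real.exp_le_exp.mpr (by linarith)
    have h4 : Real.exp (-1) = (Real.exp 1)⁻¹ := Real.exp_neg 1
    have h5 : (Real.exp 1)⁻¹ ≤ 1/2 := by
      rw [← one_div]
      exact one_div_le_one_div_of_le (by norm_num) h2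
    rw [h4] at h3; linarith
  refine ⟨hd0, hd1, ?_, ?_, ?_⟩
  · have : diagVal s = (1 - (s^2)⁻¹)/Real.pi + (1+s)*Real.exp (-s)/(Real.pi*s^2) := by
      unfold diagVal; ring
    rw [this]; linarith
  · have : diagVal s = (1 - (s^2)⁻¹)/Real.pi + (1+s)*Real.exp (-s)/(Real.pi*s^2) := by
      unfold diagVal; ring
    rw [this]; linarith
  · rw [hreq, abs_of_nonneg hrn]; exact hre


/-- exact algebraic asymptotics for the bulk conditional diagonal overlap. -/
theorem statement8 (k : ℕ) (hk : 1 ≤ k) :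
    ∃ C > (0 : ℝ), ∃ L0 > (0 : ℝ), ∀ L : ℝ, L0 ≤ L → ∀ lam : Fin k → ℂ,
      (∀ i j : Fin k, i < j → L ≤ ‖lam i - lam j‖) →
      ‖D11bulkF k lam -
          (((Real.pi ^ k)⁻¹ *
            ∏ i : Fin (k - 1),
              (1 - (‖lam (sh1 i) - lam ⟨0, by omega⟩‖ ^ 4)⁻¹) : ℝ) : ℂ)‖ ≤
        C * Real.exp (-L ^ 2) := by
  have h0k : 0 < k := hk
  refine ⟨49 * ((k-1).factorial : ℝ) + k, by positivity, 4, by norm_num, ?_⟩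
  intro L hL lam hsep
  have hL1 : (1:ℝ) ≤ L := by linarith
  have hev0 : ev0 lam = lam ⟨0, h0k⟩ := dif_pos h0k
  have hsep' : ∀ p q : Fin k, p ≠ q → L ≤ ‖lam p - lam q‖ := by
    intro p q hpq
    rcases lt_or_gt_of_ne hpq with h | h
    · exact hsep p q h
    · rw [norm_sub_rev]; exact hsep q p h
  have hA : ∀ i : Fin (k-1), L ≤ ‖lam (sh1 i) - lam ⟨0, h0k⟩‖ := by
    intro i
    exact hsep' (sh1 i) ⟨0, h0k⟩ (by simp [sh1, Fin.ext_iff])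
  have hA1 : ∀ i, 1 ≤ ‖lam (sh1 i) - lam ⟨0, h0k⟩‖ :=
    fun i => le_trans hL1 (hA i)
  have hAne : ∀ i, lam (sh1 i) ≠ lam ⟨0, h0k⟩ := by
    intro i h
    have h2 := hA i
    rw [h, sub_self] at h2
    simp at h2; linarith
  have hS1 : ∀ i, 1 ≤ (‖lam (sh1 i) - lam ⟨0, h0k⟩‖)^2 := by
    intro i; nlinarith [hA1 i]
  have hSL : ∀ i, L^2 ≤ (‖lam (sh1 i) - lam ⟨0, h0k⟩‖)^2 := by
    intro i; nlinarith [hA i, hL1]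
  have hDF : D11bulkF k lam = (1 / (Real.pi:ℂ)) *
      (Matrix.of fun i j : Fin (k - 1) =>
        K11bulk (lam (sh1 i)) (conj (lam (sh1 i))) (lam (sh1 j)) (conj (lam (sh1 j)))
          (lam ⟨0, h0k⟩) (conj (lam ⟨0, h0k⟩))).det := by
    simp only [D11bulkF, hev0]
  set Mat : Matrix (Fin (k-1)) (Fin (k-1)) ℂ := Matrix.of (fun i j : Fin (k-1) =>
    K11bulk (lam (sh1 i)) (conj (lam (sh1 i))) (lam (sh1 j)) (conj (lam (sh1 j)))
      (lam ⟨0, h0k⟩) (conj (lam ⟨0, h0k⟩))) with hMatdef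
  have hMatE : ∀ i j, Mat i j = K11bulk (lam (sh1 i)) (conj (lam (sh1 i)))
      (lam (sh1 j)) (conj (lam (sh1 j))) (lam ⟨0, h0k⟩) (conj (lam ⟨0, h0k⟩)) :=
    fun i j => rfl
  have hdiagEq : ∀ i, Mat i i
      = ((diagVal ((‖lam (sh1 i) - lam ⟨0, h0k⟩‖)^2) : ℝ) : ℂ) := by
    intro i
    rw [hMatE i i, my_diag _ _ (hAne i), Complex.sq_norm]
  -- constants
  set ε : ℝ := 7 * Real.exp (-(L^2)/2) with hεdef
  have hε0 : 0 ≤ ε := by positivity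
  have hε1 : ε ≤ 1 := by
    have h9 : (7:ℝ) ≤ Real.exp (L^2/2) := by
      have := Real.add_one_le_exp (L^2/2); nlinarith
    have h10 : Real.exp (-(L^2)/2) ≤ 7⁻¹ := by
      rw [show -(L^2)/2 = -(L^2/2) by ring, Real.exp_neg]
      exact inv_anti₀ (by norm_num) h9
    rw [hεdef]
    nlinarith
  -- off-diagonal bound
  have hc : ∀ i : Fin (k-1),
      0 < ‖lam (sh1 i) - lam ⟨0, h0k⟩‖ *
        Real.exp ((‖lam (sh1 i) - lam ⟨0, h0k⟩‖)^2/2) := by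
    intro i
    exact mul_pos (by linarith [hA1 i]) (Real.exp_pos _)
  have hoff : ∀ i j, i ≠ j →
      ((‖lam (sh1 i) - lam ⟨0, h0k⟩‖ *
          Real.exp ((‖lam (sh1 i) - lam ⟨0, h0k⟩‖)^2/2)) /
        (‖lam (sh1 j) - lam ⟨0, h0k⟩‖ *
          Real.exp ((‖lam (sh1 j) - lam ⟨0, h0k⟩‖)^2/2))) *
        ‖Mat i j‖ ≤ ε := by
    intro i j hij
    have hsh : sh1 i ≠ sh1 j := by
      intro h
      apply hij
      have h2 : (sh1 i : Fin k).val = (sh1 j : Fin k).val := by rw [h]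
      simp only [sh1] at h2
      exact Fin.ext (by omega)
    have hd : L ≤ ‖lam (sh1 i) - lam (sh1 j)‖ := hsep' _ _ hsh
    rw [hMatE i j, hεdef]
    exact my_entry_off (lam (sh1 i)) (lam (sh1 j)) (lam ⟨0, h0k⟩) L hL1 (hA i) (hA j) hd
  have hdiagAbs : ∀ i, ‖Mat i i‖ ≤ 1 := by
    intro i
    rw [hdiagEq i, Complex.norm_real, Real.norm_eq_abs]
    obtain ⟨_, _, h3, h4, _⟩ := my_diagVal_props _ (hS1 i)
    rw [abs_of_nonneg h3]; exact h4
  have hdet := my_det_approx Mat _ hc ε hε0 hε1 hoff hdiagAbs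
  -- products
  set R1 : ℝ := ∏ i : Fin (k-1), diagVal ((‖lam (sh1 i) - lam ⟨0, h0k⟩‖)^2)
    with hR1def
  set R2 : ℝ := ∏ i : Fin (k-1),
      (1 - (((‖lam (sh1 i) - lam ⟨0, h0k⟩‖)^2)^2)⁻¹)/Real.pi with hR2def
  have hprodMat : ∏ i, Mat i i = ((R1 : ℝ) : ℂ) := by
    rw [hR1def, Complex.ofReal_prod]
    exact Finset.prod_congr rfl (fun i _ => hdiagEq i)
  have hR12 : |R1 - R2| ≤ ((k-1 : ℕ) : ℝ) * Real.exp (-L^2) := by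
    have hsum := my_prod_sub Finset.univ
      (fun i => diagVal ((‖lam (sh1 i) - lam ⟨0, h0k⟩‖)^2))
      (fun i => (1 - (((‖lam (sh1 i) - lam ⟨0, h0k⟩‖)^2)^2)⁻¹)/Real.pi)
      (fun i _ => by
        obtain ⟨_, _, h3, h4, _⟩ := my_diagVal_props _ (hS1 i)
        rw [abs_of_nonneg h3]; exact h4)
      (fun i _ => by
        obtain ⟨h1, h2, _, _, _⟩ := my_diagVal_props _ (hS1 i)
        rw [abs_of_nonneg h1]; exact h2)
    have hterm : ∀ i ∈ Finset.univ,
        |diagVal ((‖lam (sh1 i) - lam ⟨0, h0k⟩‖)^2) -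
          (1 - (((‖lam (sh1 i) - lam ⟨0, h0k⟩‖)^2)^2)⁻¹)/Real.pi|
        ≤ Real.exp (-L^2) := by
      intro i _
      obtain ⟨_, _, _, _, h5⟩ := my_diagVal_props _ (hS1 i)
      refine h5.trans (Real.exp_le_exp.mpr ?_)
      have := hSL i; linarith
    calc |R1 - R2| ≤ ∑ i : Fin (k-1),
          |diagVal ((‖lam (sh1 i) - lam ⟨0, h0k⟩‖)^2) -
            (1 - (((‖lam (sh1 i) - lam ⟨0, h0k⟩‖)^2)^2)⁻¹)/Real.pi| := hsum
      _ ≤ (Finset.univ : Finset (Fin (k-1))).card • Real.exp (-L^2) :=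
          Finset.sum_le_card_nsmul _ _ _ hterm
      _ = ((k-1 : ℕ) : ℝ) * Real.exp (-L^2) := by
          rw [Finset.card_univ, Fintype.card_fin, nsmul_eq_mul]
  -- target identification
  have hTR : ((Real.pi ^ k)⁻¹ *
        ∏ i : Fin (k - 1), (1 - (‖lam (sh1 i) - lam ⟨0, h0k⟩‖ ^ 4)⁻¹) : ℝ)
      = (1/Real.pi) * R2 := by
    rw [hR2def]
    have hstep : ∀ i : Fin (k-1),
        (1 - (((‖lam (sh1 i) - lam ⟨0, h0k⟩‖)^2)^2)⁻¹)/Real.pi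
        = (1 - (‖lam (sh1 i) - lam ⟨0, h0k⟩‖ ^ 4)⁻¹) * (Real.pi)⁻¹ := by
      intro i
      have h4 : ((‖lam (sh1 i) - lam ⟨0, h0k⟩‖)^2)^2
          = ‖lam (sh1 i) - lam ⟨0, h0k⟩‖ ^ 4 := by ring
      rw [h4]; ring
    rw [Finset.prod_congr rfl (fun i _ => hstep i), Finset.prod_mul_distrib,
      Finset.prod_const, Finset.card_univ, Fintype.card_fin]
    have hpow : ((Real.pi)⁻¹)^(k-1) * (Real.pi)⁻¹ = (Real.pi ^ k)⁻¹ := by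
      rw [← pow_succ, Nat.sub_add_cancel hk, inv_pow]
    rw [← hpow]; ring
  -- final assembly
  have hsplit2 : D11bulkF k lam -
      ((((Real.pi ^ k)⁻¹ *
        ∏ i : Fin (k - 1), (1 - (‖lam (sh1 i) - lam ⟨0, h0k⟩‖ ^ 4)⁻¹) : ℝ)) : ℂ)
      = (1/(Real.pi:ℂ)) * ((Mat.det - ((R1:ℝ):ℂ)) + (((R1:ℝ):ℂ) - ((R2:ℝ):ℂ))) := by
    rw [hDF, hTR]
    push_cast
    ring
  have habs_pi : ‖1/(Real.pi:ℂ)‖ = 1/Real.pi := by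
    rw [norm_div, norm_one, Complex.norm_real, Real.norm_eq_abs, abs_of_pos Real.pi_pos]
  have hε2 : ε^2 = 49 * Real.exp (-L^2) := by
    have hmul : Real.exp (-(L^2)/2) * Real.exp (-(L^2)/2) = Real.exp (-L^2) := by
      rw [← Real.exp_add]; congr 1; ring
    have : ε^2 = 49 * (Real.exp (-(L^2)/2) * Real.exp (-(L^2)/2)) := by rw [hεdef]; ring
    rw [this, hmul]
  rw [hprodMat] at hdet
  have h2abs : ‖((R1:ℝ):ℂ) - ((R2:ℝ):ℂ)‖ = |R1 - R2| := by
    rw [← Complex.ofReal_sub, Complex.norm_real, Real.norm_eq_abs]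
  have hkcast : ((k-1 : ℕ) : ℝ) ≤ (k : ℝ) := by
    exact_mod_cast Nat.sub_le k 1
  have hpile : 1/Real.pi ≤ 1 := by
    rw [div_le_one Real.pi_pos]; linarith [Real.pi_gt_three]
  have hpinn : 0 ≤ 1/Real.pi := by positivity
  have final : ‖D11bulkF k lam -
      ((((Real.pi ^ k)⁻¹ *
        ∏ i : Fin (k - 1), (1 - (‖lam (sh1 i) - lam ⟨0, h0k⟩‖ ^ 4)⁻¹) : ℝ)) : ℂ)‖
      ≤ (49 * ((k-1).factorial : ℝ) + k) * Real.exp (-L^2) := by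
    rw [hsplit2, norm_mul, habs_pi]
    have htri2 : ‖(Mat.det - ((R1:ℝ):ℂ)) + (((R1:ℝ):ℂ) - ((R2:ℝ):ℂ))‖
        ≤ ((k-1).factorial : ℝ) * ε^2 + ((k-1 : ℕ) : ℝ) * Real.exp (-L^2) := by
      calc ‖(Mat.det - ((R1:ℝ):ℂ)) + (((R1:ℝ):ℂ) - ((R2:ℝ):ℂ))‖
          ≤ ‖Mat.det - ((R1:ℝ):ℂ)‖ + ‖((R1:ℝ):ℂ) - ((R2:ℝ):ℂ)‖ :=
            norm_add_le _ _
        _ ≤ ((k-1).factorial : ℝ) * ε^2 + ((k-1 : ℕ) : ℝ) * Real.exp (-L^2) := by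
            rw [h2abs]; exact add_le_add hdet hR12
    calc 1/Real.pi * ‖(Mat.det - ((R1:ℝ):ℂ)) + (((R1:ℝ):ℂ) - ((R2:ℝ):ℂ))‖
        ≤ 1 * (((k-1).factorial : ℝ) * ε^2 + ((k-1 : ℕ) : ℝ) * Real.exp (-L^2)) :=
          mul_le_mul hpile htri2 (norm_nonneg _) (by norm_num)
      _ ≤ (49 * ((k-1).factorial : ℝ) + k) * Real.exp (-L^2) := by
          rw [one_mul, hε2]
          have hf1 : (1:ℝ) ≤ ((k-1).factorial : ℝ) := by
            exact_mod_cast Nat.one_le_iff_ne_zero.mpr (Nat.factorial_ne_zero _)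
          have he := (Real.exp_pos (-L^2)).le
          nlinarith [Real.exp_pos (-L^2)]
  exact final
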